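/- Let U, Û ∈ O_{p,r}, let U_⊥ be an orthogonal complement of U, and let T be a p×q matrix of rank at most r whose column space equals the column space of U, with smallest nonzero singular value σ_r(T) > 0. Then ‖sinΘ(Û, U)‖ = ‖Û_⊥ᵀ U‖ ≤ ‖Û_⊥ᵀ T‖ / σ_r(T), where Û_⊥ is an orthogonal complement of Û. -/
import Mathlib


open Matrix

/-- Spectral (operator) norm of a real matrix. -/
noncomputable def spec {m n : ℕ} (A : Matrix (Fin m) (Fin n) ℝ) : ℝ :=
  sSup {c : ℝ | ∃ v : Fin n → ℝ, (∑ j, v j ^ 2) ≤ 1 ∧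
    c = Real.sqrt (∑ i, (A.mulVec v i) ^ 2)}

lemma spec_mem_le {m n : ℕ} (B : Matrix (Fin m) (Fin n) ℝ) (v : Fin n → ℝ)
    (hv : (∑ j, v j ^ 2) ≤ 1) :
    Real.sqrt (∑ i, (B.mulVec v i) ^ 2) ≤ spec B := by
  apply le_csSup
  · refine ⟨Real.sqrt (∑ i, ∑ j, B i j ^ 2), ?_⟩
    rintro c ⟨w, hw, rfl⟩
    apply Real.sqrt_le_sqrt
    calc ∑ i, (B.mulVec w i) ^ 2
        ≤ ∑ i, (∑ j, B i j ^ 2) * (∑ j, w j ^ 2) := by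
          refine Finset.sum_le_sum fun i _ => ?_
          simpa [Matrix.mulVec, dotProduct] using
            Finset.sum_mul_sq_le_sq_mul_sq Finset.univ (fun j => B i j) w
      _ ≤ ∑ i, (∑ j, B i j ^ 2) * 1 := by
          refine Finset.sum_le_sum fun i _ => ?_
          exact mul_le_mul_of_nonneg_left hw (by positivity)
      _ = ∑ i, ∑ j, B i j ^ 2 := by simp
  · exact ⟨v, hv, rfl⟩

lemma spec_nonneg {m n : ℕ} (B : Matrix (Fin m) (Fin n) ℝ) : 0 ≤ spec B := by
  have h := spec_mem_le B 0 (by simp)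
  simpa using h

/-- If `T` has rank at most `r`, its column space equals that of `U ∈ O_{p,r}` (i.e.
`T = U·(UᵀT)`), and `σ > 0` is a lower bound on the `r`-th singular value of `T`
(equivalently, `‖vᵀM‖ ≥ σ‖v‖` for all `v`, where `M = UᵀT`), then
`‖sinΘ(Û,U)‖ = ‖Û_⊥ᵀU‖ ≤ ‖Û_⊥ᵀT‖/σ_r(T)`. -/
theorem stmt12 (p q r : ℕ)
    (U Uhat : Matrix (Fin p) (Fin r) ℝ)
    (Uhatperp : Matrix (Fin p) (Fin (p - r)) ℝ)
    (hU : Uᵀ * U = 1) (hUhat : Uhatᵀ * Uhat = 1)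
    (hUhatperp : Uhatperpᵀ * Uhatperp = 1)
    (hperp : Uhatᵀ * Uhatperp = 0)
    (hcompl : Uhat * Uhatᵀ + Uhatperp * Uhatperpᵀ = 1)
    (T : Matrix (Fin p) (Fin q) ℝ) (M : Matrix (Fin r) (Fin q) ℝ)
    (hM : M = Uᵀ * T) (hT : T = U * M)
    (σ : ℝ) (hσ : 0 < σ)
    (hσr : ∀ v : Fin r → ℝ, σ ^ 2 * (∑ i, v i ^ 2) ≤ ∑ j, (Matrix.vecMul v M j) ^ 2) :
    spec (Uhatperpᵀ * U) ≤ spec (Uhatperpᵀ * T) / σ := by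
  set B := Uhatperpᵀ * T with hB
  -- G = M Mᵀ is injective, hence surjective
  have hGsurj : Function.Surjective (Matrix.mulVecLin (M * Mᵀ)) := by
    rw [← LinearMap.injective_iff_surjective, ← LinearMap.ker_eq_bot,
      LinearMap.ker_eq_bot']
    intro x hx
    have hx' : (M * Mᵀ) *ᵥ x = 0 := hx
    have hdot : ∑ j, (Matrix.vecMul x M j) ^ 2 = x ⬝ᵥ ((M * Mᵀ) *ᵥ x) := by
      calc ∑ j, (Matrix.vecMul x M j) ^ 2
          = (x ᵥ* M) ⬝ᵥ (Mᵀ *ᵥ x) := by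
            rw [Matrix.mulVec_transpose]
            simp [dotProduct, sq]
        _ = x ⬝ᵥ (M *ᵥ (Mᵀ *ᵥ x)) := (Matrix.dotProduct_mulVec x M (Mᵀ *ᵥ x)).symm
        _ = x ⬝ᵥ ((M * Mᵀ) *ᵥ x) := by rw [Matrix.mulVec_mulVec]
    have h0 : σ ^ 2 * (∑ i, x i ^ 2) ≤ 0 := by
      have := hσr x
      rw [hdot, hx'] at this
      simpa using this
    have hsum : ∑ i, x i ^ 2 ≤ 0 :=
      le_of_mul_le_mul_left (by simpa using h0) (pow_pos hσ 2)
    funext i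
    have h1 : x i ^ 2 ≤ 0 := le_trans (Finset.single_le_sum
      (f := fun i => x i ^ 2) (fun i _ => sq_nonneg (x i)) (Finset.mem_univ i)) hsum
    have : x i ^ 2 = 0 := le_antisymm h1 (sq_nonneg _)
    simpa using pow_eq_zero_iff (n := 2) (by norm_num) |>.mp this
  -- main bound for each element of the sup set
  have key : ∀ v : Fin r → ℝ, (∑ j, v j ^ 2) ≤ 1 →
      Real.sqrt (∑ i, ((Uhatperpᵀ * U).mulVec v i) ^ 2) ≤ spec B / σ := by
    intro v hv
    obtain ⟨z, hz⟩ := hGsurj v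
    have hz' : (M * Mᵀ) *ᵥ z = v := hz
    set w : Fin q → ℝ := Mᵀ *ᵥ z with hwdef
    have hMw : M *ᵥ w = v := by rw [hwdef, Matrix.mulVec_mulVec]; exact hz'
    have hw2 : ∑ j, w j ^ 2 = z ⬝ᵥ v := by
      calc ∑ j, w j ^ 2 = w ⬝ᵥ w := by simp [dotProduct, sq]
        _ = (z ᵥ* M) ⬝ᵥ (Mᵀ *ᵥ z) := by rw [hwdef, Matrix.mulVec_transpose]
        _ = z ⬝ᵥ (M *ᵥ (Mᵀ *ᵥ z)) := (Matrix.dotProduct_mulVec z M (Mᵀ *ᵥ z)).symm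
        _ = z ⬝ᵥ v := by rw [← hwdef, hMw]
    have hσz : σ ^ 2 * (∑ i, z i ^ 2) ≤ ∑ j, w j ^ 2 := by
      have := hσr z
      rwa [← Matrix.mulVec_transpose, ← hwdef] at this
    have hCS : (z ⬝ᵥ v) ^ 2 ≤ (∑ i, z i ^ 2) * (∑ j, v j ^ 2) := by
      simpa [dotProduct] using Finset.sum_mul_sq_le_sq_mul_sq Finset.univ z v
    have hwnn : (0 : ℝ) ≤ ∑ j, w j ^ 2 :=
      Finset.sum_nonneg fun j _ => sq_nonneg _
    have hznn : (0 : ℝ) ≤ ∑ i, z i ^ 2 :=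
      Finset.sum_nonneg fun i _ => sq_nonneg _
    have hvnn : (0 : ℝ) ≤ ∑ j, v j ^ 2 :=
      Finset.sum_nonneg fun j _ => sq_nonneg _
    -- σ² ‖w‖² ≤ 1
    have hwb : σ ^ 2 * (∑ j, w j ^ 2) ≤ 1 := by
      rcases eq_or_lt_of_le hwnn with h | h
      · nlinarith
      · rw [hw2] at h ⊢
        nlinarith [mul_le_mul_of_nonneg_right hσz hvnn]
    -- image equality
    have himg : (Uhatperpᵀ * U) *ᵥ v = B *ᵥ w := by
      rw [hB, hT, ← Matrix.mul_assoc, ← hMw, Matrix.mulVec_mulVec]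
    -- scaled witness
    set w' : Fin q → ℝ := σ • w with hw'def
    have hw'2 : ∑ j, w' j ^ 2 ≤ 1 := by
      have : ∑ j, w' j ^ 2 = σ ^ 2 * ∑ j, w j ^ 2 := by
        rw [Finset.mul_sum]
        refine Finset.sum_congr rfl fun j _ => ?_
        simp [hw'def, mul_pow]
      rw [this]; exact hwb
    have hBw' : ∀ i, (B *ᵥ w') i = σ * (B *ᵥ w) i := by
      intro i
      rw [hw'def, Matrix.mulVec_smul]
      simp
    have hsq : ∑ i, ((B *ᵥ w') i) ^ 2 = σ ^ 2 * ∑ i, ((B *ᵥ w) i) ^ 2 := by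
      rw [Finset.mul_sum]
      refine Finset.sum_congr rfl fun i _ => ?_
      rw [hBw' i]; ring
    have hsqrt : Real.sqrt (∑ i, ((B *ᵥ w') i) ^ 2)
        = σ * Real.sqrt (∑ i, ((B *ᵥ w) i) ^ 2) := by
      rw [hsq, Real.sqrt_mul (sq_nonneg σ), Real.sqrt_sq hσ.le]
    have hle : Real.sqrt (∑ i, ((B *ᵥ w') i) ^ 2) ≤ spec B := spec_mem_le B w' hw'2
    rw [hsqrt] at hle
    rw [himg]
    rw [le_div_iff₀ hσ]
    linarith [hle]
  apply Real.sSup_le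
  · rintro c ⟨v, hv, rfl⟩
    exact key v hv
  · exact div_nonneg (spec_nonneg B) hσ.le
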